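/- arXiv:1910.09213 — 2 statements merged into one kernel-verified Lean document; each statement's English description precedes it below -/
import Mathlib

section
/- A probability measure μ on I = [0,1] ∪ {∞} solves the RDE Y ≐ χ[τ,κ](Y₁,Y₂) (with τ uniform on [0,1], κ uniform on {1,2}, Y₁,Y₂ i.i.d. copies of Y, all independent) if and only if ∫_{[0,t]} s dμ(s) = μ([0,t])² for all t ∈ [0,1]. -/
open MeasureTheory Set
open scoped ENNReal

/-- χ[τ,κ](x,y) on I = [0,1] ∪ {∞} ⊆ ℝ≥0∞, with κ encoded as Bool (false ↔ 1, true ↔ 2). -/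
noncomputable def chiMap (t : ℝ) (k : Bool) (x y : ℝ≥0∞) : ℝ≥0∞ :=
  if k then min x y else (if ENNReal.ofReal t < x then x else ⊤)

/-- The uniform distribution on {1,2}, encoded as a measure on Bool. -/
noncomputable def unifBool : Measure Bool :=
  (2:ℝ≥0∞)⁻¹ • Measure.dirac true + (2:ℝ≥0∞)⁻¹ • Measure.dirac false

lemma chi_measurable :
    Measurable (fun p : (ℝ × Bool) × ℝ≥0∞ × ℝ≥0∞ => chiMap p.1.1 p.1.2 p.2.1 p.2.2) := by
  unfold chiMap
  apply Measurable.ite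
  · exact measurable_fst.snd (measurableSet_singleton true)
  · exact measurable_snd.fst.min measurable_snd.snd
  · exact Measurable.ite
      (measurableSet_lt (ENNReal.measurable_ofReal.comp measurable_fst.fst) measurable_snd.fst)
      measurable_snd.fst measurable_const

instance : IsProbabilityMeasure unifBool := by
  constructor
  simp [unifBool, ENNReal.inv_two_add_inv_two]

lemma lintegral_unifBool (f : Bool → ℝ≥0∞) :
    ∫⁻ k, f k ∂unifBool = 2⁻¹ * f true + 2⁻¹ * f false := by
  simp [unifBool, lintegral_add_measure, lintegral_smul_measure, lintegral_dirac]

instance : IsProbabilityMeasure (volume.restrict (Set.Icc (0:ℝ) 1)) := by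
  constructor
  simp [Measure.restrict_apply, Real.volume_Icc]

/-- Fubini computation of the τ-integral. -/
lemma key_fubini (μ : Measure ℝ≥0∞) [IsProbabilityMeasure μ]
    (hconc : μ {x : ℝ≥0∞ | 1 < x ∧ x ≠ ⊤} = 0) {a : ℝ≥0∞} (ha : a ≠ ⊤) :
    ∫⁻ t in Icc (0:ℝ) 1, μ (Ioc (ENNReal.ofReal t) a) = ∫⁻ s in Iic a, s ∂μ := by
  have h1 : ∀ c : ℝ≥0∞, μ (Ioc c a) = ∫⁻ s, (if c < s ∧ s ≤ a then (1:ℝ≥0∞) else 0) ∂μ := by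
    intro c
    rw [← lintegral_indicator_one measurableSet_Ioc]
    refine lintegral_congr fun s => ?_
    simp [Set.indicator_apply, Set.mem_Ioc]
  have hmeas : Measurable (fun q : ℝ × ℝ≥0∞ =>
      (if ENNReal.ofReal q.1 < q.2 ∧ q.2 ≤ a then (1:ℝ≥0∞) else 0)) := by
    apply Measurable.ite _ measurable_const measurable_const
    exact (measurableSet_lt (ENNReal.measurable_ofReal.comp measurable_fst) measurable_snd).inter
      (measurable_snd measurableSet_Iic)
  calc ∫⁻ t in Icc (0:ℝ) 1, μ (Ioc (ENNReal.ofReal t) a)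
      = ∫⁻ t in Icc (0:ℝ) 1, ∫⁻ s, (if ENNReal.ofReal t < s ∧ s ≤ a then (1:ℝ≥0∞) else 0) ∂μ := by
        exact lintegral_congr fun t => h1 _
    _ = ∫⁻ s, (∫⁻ t in Icc (0:ℝ) 1, (if ENNReal.ofReal t < s ∧ s ≤ a then (1:ℝ≥0∞) else 0)) ∂μ := by
        exact lintegral_lintegral_swap hmeas.aemeasurable
    _ = ∫⁻ s, (Iic a).indicator (fun s => min s 1) s ∂μ := by
        refine lintegral_congr fun s => ?_
        show (∫⁻ t in Icc (0:ℝ) 1, (if ENNReal.ofReal t < s ∧ s ≤ a then (1:ℝ≥0∞) else 0)) = _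
        by_cases hsa : s ≤ a
        · have hstop : s ≠ ⊤ := fun h => ha (top_le_iff.mp (h ▸ hsa))
          rw [Set.indicator_of_mem (show s ∈ Iic a from hsa)]
          by_cases hs1 : s ≤ 1
          · have hst1 : s.toReal ≤ 1 := by
              simpa using ENNReal.toReal_mono (by norm_num) hs1
            calc ∫⁻ t in Icc (0:ℝ) 1, (if ENNReal.ofReal t < s ∧ s ≤ a then (1:ℝ≥0∞) else 0)
                = ∫⁻ t in Icc (0:ℝ) 1, (Iio s.toReal).indicator 1 t := by
                  refine setLIntegral_congr_fun_ae measurableSet_Icc (ae_of_all _ fun t ht => ?_)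
                  rw [Set.indicator_apply]
                  simp only [mem_Iio, Pi.one_apply]
                  by_cases h : t < s.toReal
                  · rw [if_pos h, if_pos ⟨(ENNReal.ofReal_lt_iff_lt_toReal ht.1 hstop).mpr h, hsa⟩]
                  · rw [if_neg h, if_neg]
                    rintro ⟨h1, -⟩
                    exact h ((ENNReal.ofReal_lt_iff_lt_toReal ht.1 hstop).mp h1)
              _ = volume (Iio s.toReal ∩ Icc (0:ℝ) 1) := by
                  rw [lintegral_indicator_one measurableSet_Iio,
                    Measure.restrict_apply measurableSet_Iio]
              _ = min s 1 := by
                  have : Iio s.toReal ∩ Icc (0:ℝ) 1 = Ico (0:ℝ) s.toReal := by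
                    ext t
                    simp only [mem_inter_iff, mem_Iio, mem_Icc, mem_Ico]
                    constructor
                    · rintro ⟨h1, h2, h3⟩; exact ⟨h2, h1⟩
                    · rintro ⟨h1, h2⟩; exact ⟨h2, h1, h2.le.trans hst1⟩
                  rw [this, Real.volume_Ico, sub_zero, ENNReal.ofReal_toReal hstop,
                    min_eq_left hs1]
          · push_neg at hs1
            calc ∫⁻ t in Icc (0:ℝ) 1, (if ENNReal.ofReal t < s ∧ s ≤ a then (1:ℝ≥0∞) else 0)
                = ∫⁻ _t in Icc (0:ℝ) 1, (1:ℝ≥0∞) := by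
                  refine setLIntegral_congr_fun_ae measurableSet_Icc (ae_of_all _ fun t ht => ?_)
                  rw [if_pos ⟨lt_of_le_of_lt (ENNReal.ofReal_le_one.mpr ht.2) hs1, hsa⟩]
              _ = min s 1 := by
                  rw [setLIntegral_const, one_mul, Real.volume_Icc, sub_zero,
                    ENNReal.ofReal_one, min_eq_right hs1.le]
        · rw [Set.indicator_of_notMem (show s ∉ Iic a from hsa)]
          refine (lintegral_eq_zero_iff ?_).mpr ?_
          · apply Measurable.ite _ measurable_const measurable_const
            exact (measurableSet_lt ENNReal.measurable_ofReal measurable_const).inter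
              (MeasurableSet.const _)
          · refine ae_of_all _ fun t => ?_
            simp [hsa]
    _ = ∫⁻ s in Iic a, min s 1 ∂μ := by
        rw [lintegral_indicator measurableSet_Iic]
    _ = ∫⁻ s in Iic a, s ∂μ := by
        refine setLIntegral_congr_fun_ae measurableSet_Iic ?_
        rw [ae_iff]
        refine measure_mono_null ?_ hconc
        intro s hs
        simp only [mem_setOf_eq] at hs ⊢
        push_neg at hs
        obtain ⟨hsa, hne⟩ := hs
        have h1s : 1 < s := by
          by_contra h
          push_neg at h
          exact hne (min_eq_left h)
        exact ⟨h1s, fun h => ha (top_le_iff.mp (h ▸ hsa))⟩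

/-- The measure of Iic a under the mapped measure. -/
lemma map_Iic (μ : Measure ℝ≥0∞) [IsProbabilityMeasure μ] {a : ℝ≥0∞} (ha : a ≠ ⊤) :
    (Measure.map (fun p : (ℝ × Bool) × ℝ≥0∞ × ℝ≥0∞ => chiMap p.1.1 p.1.2 p.2.1 p.2.2)
        (((volume.restrict (Set.Icc (0:ℝ) 1)).prod unifBool).prod (μ.prod μ))) (Iic a)
    = 2⁻¹ * (μ.prod μ) {q : ℝ≥0∞ × ℝ≥0∞ | min q.1 q.2 ≤ a}
      + 2⁻¹ * ∫⁻ t in Icc (0:ℝ) 1, μ (Ioc (ENNReal.ofReal t) a) := by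
  have hS : MeasurableSet ((fun p : (ℝ × Bool) × ℝ≥0∞ × ℝ≥0∞ =>
      chiMap p.1.1 p.1.2 p.2.1 p.2.2) ⁻¹' Iic a) :=
    chi_measurable measurableSet_Iic
  rw [Measure.map_apply chi_measurable measurableSet_Iic, Measure.prod_apply hS]
  have hslice : ∀ z : ℝ × Bool, (μ.prod μ) (Prod.mk z ⁻¹' ((fun p : (ℝ × Bool) × ℝ≥0∞ × ℝ≥0∞ =>
      chiMap p.1.1 p.1.2 p.2.1 p.2.2) ⁻¹' Iic a))
      = (μ.prod μ) {q : ℝ≥0∞ × ℝ≥0∞ | chiMap z.1 z.2 q.1 q.2 ≤ a} := fun z => rfl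
  calc ∫⁻ z, (μ.prod μ) (Prod.mk z ⁻¹' ((fun p : (ℝ × Bool) × ℝ≥0∞ × ℝ≥0∞ =>
        chiMap p.1.1 p.1.2 p.2.1 p.2.2) ⁻¹' Iic a))
        ∂((volume.restrict (Set.Icc (0:ℝ) 1)).prod unifBool)
      = ∫⁻ t in Icc (0:ℝ) 1, ∫⁻ k, (μ.prod μ)
          {q : ℝ≥0∞ × ℝ≥0∞ | chiMap t k q.1 q.2 ≤ a} ∂unifBool := by
        rw [lintegral_prod _ ((measurable_measure_prodMk_left hS).aemeasurable)]
        rfl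
    _ = ∫⁻ t in Icc (0:ℝ) 1, (2⁻¹ * (μ.prod μ) {q : ℝ≥0∞ × ℝ≥0∞ | min q.1 q.2 ≤ a}
          + 2⁻¹ * μ (Ioc (ENNReal.ofReal t) a)) := by
        refine lintegral_congr fun t => ?_
        rw [lintegral_unifBool]
        have htrue : {q : ℝ≥0∞ × ℝ≥0∞ | chiMap t true q.1 q.2 ≤ a}
            = {q : ℝ≥0∞ × ℝ≥0∞ | min q.1 q.2 ≤ a} := by
          ext q; simp [chiMap]
        have hfalse : {q : ℝ≥0∞ × ℝ≥0∞ | chiMap t false q.1 q.2 ≤ a}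
            = Ioc (ENNReal.ofReal t) a ×ˢ (univ : Set ℝ≥0∞) := by
          ext q
          simp only [chiMap, Bool.false_eq_true, if_false, mem_setOf_eq, mem_prod, mem_Ioc,
            mem_univ, and_true]
          by_cases h : ENNReal.ofReal t < q.1
          · simp [h]
          · simp [h, ha, top_le_iff]
        rw [htrue, hfalse, Measure.prod_prod, measure_univ, mul_one]
    _ = 2⁻¹ * (μ.prod μ) {q : ℝ≥0∞ × ℝ≥0∞ | min q.1 q.2 ≤ a}
        + 2⁻¹ * ∫⁻ t in Icc (0:ℝ) 1, μ (Ioc (ENNReal.ofReal t) a) := by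
        have hmeas : Measurable fun t : ℝ => μ (Ioc (ENNReal.ofReal t) a) := by
          have : Antitone fun t : ℝ => μ (Ioc (ENNReal.ofReal t) a) := fun t₁ t₂ h =>
            measure_mono (Ioc_subset_Ioc_left (ENNReal.ofReal_le_ofReal h))
          exact this.measurable
        rw [lintegral_add_left measurable_const, lintegral_const_mul _ hmeas,
          setLIntegral_const]
        simp [Real.volume_Icc]

lemma arith {F G M L : ℝ≥0∞} (hFG : F + G = 1) (hMG : M + G^2 = 1) (hL : L ≠ ⊤) :
    (F = 2⁻¹ * M + 2⁻¹ * L) ↔ L = F^2 := by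
  have hF : F ≠ ⊤ := fun h => by simp [h] at hFG
  have hG : G ≠ ⊤ := fun h => by simp [h] at hFG
  have hM : M ≠ ⊤ := fun h => by simp [h] at hMG
  have hG2 : G^2 ≠ ⊤ := ENNReal.pow_ne_top hG
  have hFG' : F.toReal + G.toReal = 1 := by
    rw [← ENNReal.toReal_add hF hG, hFG, ENNReal.toReal_one]
  have hMG' : M.toReal + G.toReal^2 = 1 := by
    rw [← ENNReal.toReal_pow, ← ENNReal.toReal_add hM hG2, hMG, ENNReal.toReal_one]
  constructor
  · intro hE
    have hE' : F.toReal = 2⁻¹ * M.toReal + 2⁻¹ * L.toReal := by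
      have := congrArg ENNReal.toReal hE
      rwa [ENNReal.toReal_add (ENNReal.mul_ne_top (by simp) hM) (ENNReal.mul_ne_top (by simp) hL),
        ENNReal.toReal_mul, ENNReal.toReal_mul, ENNReal.toReal_inv, ENNReal.toReal_ofNat] at this
    rw [← ENNReal.toReal_eq_toReal_iff' hL (ENNReal.pow_ne_top hF), ENNReal.toReal_pow]
    linear_combination (G.toReal + 1 - F.toReal) * hFG' + (-1) * hMG' + (-2) * hE'
  · intro hE
    have hE' : L.toReal = F.toReal^2 := by
      rw [hE, ENNReal.toReal_pow]
    rw [← ENNReal.toReal_eq_toReal_iff' hF (ENNReal.add_ne_top.mpr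
      ⟨ENNReal.mul_ne_top (by simp) hM, ENNReal.mul_ne_top (by simp) hL⟩),
      ENNReal.toReal_add (ENNReal.mul_ne_top (by simp) hM) (ENNReal.mul_ne_top (by simp) hL),
      ENNReal.toReal_mul, ENNReal.toReal_mul, ENNReal.toReal_inv, ENNReal.toReal_ofNat]
    linear_combination ((G.toReal + 1 - F.toReal)/2) * hFG' + (-1/2) * hMG' + (-1/2) * hE'

/-- A probability measure μ on I = [0,1] ∪ {∞} solves the RDE Y ≐ χ[τ,κ](Y₁,Y₂)
(τ uniform on [0,1], κ uniform on {1,2}, Y₁, Y₂ i.i.d. ~ μ, all independent)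
if and only if ∫_{[0,t]} s dμ(s) = μ([0,t])² for all t ∈ [0,1]. -/
theorem stmt2 (μ : Measure ℝ≥0∞) [IsProbabilityMeasure μ]
    (hconc : μ {x : ℝ≥0∞ | 1 < x ∧ x ≠ ⊤} = 0) :
    (Measure.map (fun p : (ℝ × Bool) × ℝ≥0∞ × ℝ≥0∞ => chiMap p.1.1 p.1.2 p.2.1 p.2.2)
        (((volume.restrict (Set.Icc (0:ℝ) 1)).prod unifBool).prod (μ.prod μ)) = μ)
    ↔ ∀ t ∈ Set.Icc (0:ℝ) 1,
        ∫⁻ s in Set.Icc 0 (ENNReal.ofReal t), s ∂μ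
          = (μ (Set.Icc 0 (ENNReal.ofReal t)))^2 := by
  have hIcc : ∀ b : ℝ≥0∞, Set.Icc (0:ℝ≥0∞) b = Set.Iic b := fun b => by
    ext x; simp [zero_le]
  -- basic facts for arith
  have hFG : ∀ a : ℝ≥0∞, μ (Iic a) + μ (Ioi a) = 1 := fun a => by
    rw [← compl_Iic, measure_add_measure_compl measurableSet_Iic, measure_univ]
  have hminmeas : ∀ a : ℝ≥0∞, MeasurableSet {q : ℝ≥0∞ × ℝ≥0∞ | min q.1 q.2 ≤ a} := fun a =>
    (measurable_fst.min measurable_snd) measurableSet_Iic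
  have hMG : ∀ a : ℝ≥0∞,
      (μ.prod μ) {q : ℝ≥0∞ × ℝ≥0∞ | min q.1 q.2 ≤ a} + (μ (Ioi a))^2 = 1 := by
    intro a
    have hc : {q : ℝ≥0∞ × ℝ≥0∞ | min q.1 q.2 ≤ a}ᶜ = Ioi a ×ˢ Ioi a := by
      ext q
      simp [mem_prod, lt_min_iff, not_le]
    rw [← measure_univ (μ := μ.prod μ), ← measure_add_measure_compl (hminmeas a), hc,
      Measure.prod_prod, sq]
  have hLne : ∀ a : ℝ≥0∞, a ≠ ⊤ → (∫⁻ s in Iic a, s ∂μ) ≠ ⊤ := by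
    intro a ha
    have : (∫⁻ s in Iic a, s ∂μ) ≤ a * μ (Iic a) := by
      rw [← setLIntegral_const]
      exact setLIntegral_mono measurable_const fun s hs => hs
    refine ne_top_of_le_ne_top ?_ this
    exact ENNReal.mul_ne_top ha (measure_ne_top μ _)
  constructor
  · intro h t ht
    set a := ENNReal.ofReal t with ha_def
    have ha : a ≠ ⊤ := ENNReal.ofReal_ne_top
    have key := map_Iic μ ha
    rw [h, key_fubini μ hconc ha] at key
    rw [hIcc]
    exact (arith (hFG a) (hMG a) (hLne a ha)).mp key
  · intro h
    haveI : IsProbabilityMeasure (Measure.map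
        (fun p : (ℝ × Bool) × ℝ≥0∞ × ℝ≥0∞ => chiMap p.1.1 p.1.2 p.2.1 p.2.2)
        (((volume.restrict (Set.Icc (0:ℝ) 1)).prod unifBool).prod (μ.prod μ))) :=
      Measure.isProbabilityMeasure_map chi_measurable.aemeasurable
    refine Measure.ext_of_Iic _ μ fun a => ?_
    by_cases ha : a = ⊤
    · subst ha
      rw [Iic_top, measure_univ, measure_univ]
    · have claim : ∫⁻ s in Iic a, s ∂μ = (μ (Iic a))^2 := by
        by_cases ha1 : a ≤ 1
        · have h1 : a.toReal ∈ Set.Icc (0:ℝ) 1 := by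
            refine ⟨ENNReal.toReal_nonneg, ?_⟩
            simpa using ENNReal.toReal_mono (by norm_num) ha1
          have := h a.toReal h1
          rwa [ENNReal.ofReal_toReal ha, hIcc] at this
        · push_neg at ha1
          have hnull : μ (Ioc 1 a) = 0 := by
            refine measure_mono_null ?_ hconc
            intro x hx
            exact ⟨hx.1, fun hxt => ha (top_le_iff.mp (hxt ▸ hx.2))⟩
          have hset : Iic (1:ℝ≥0∞) ∪ Ioc 1 a = Iic a := Iic_union_Ioc_eq_Iic ha1.le
          have hF : μ (Iic a) = μ (Iic 1) := by
            rw [← hset]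
            refine le_antisymm ((measure_union_le _ _).trans ?_) (measure_mono subset_union_left)
            rw [hnull, add_zero]
          have hL : ∫⁻ s in Iic a, s ∂μ = ∫⁻ s in Iic (1:ℝ≥0∞), s ∂μ := by
            rw [← hset, lintegral_union measurableSet_Ioc (Iic_disjoint_Ioc le_rfl),
              setLIntegral_measure_zero _ _ hnull, add_zero]
          have h1 := h 1 ⟨zero_le_one, le_rfl⟩
          rw [ENNReal.ofReal_one, hIcc] at h1
          rw [hF, hL, h1]
      rw [map_Iic μ ha, key_fubini μ hconc ha]
      exact ((arith (hFG a) (hMG a) (hLne a ha)).mpr claim).symm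
end

section
/- Every solution μ of the RDE X ≐ γ[τ](X₁,X₂) (τ uniform on [0,1], X₁,X₂ i.i.d. copies of X independent of τ, γ[t](x,y) = x∧y if x∧y > t, else ∞) is concentrated on [1/2, 1] ∪ {∞}; in particular μ([0,1/2)) = 0. -/
open MeasureTheory Set
open scoped ENNReal

/-- γ[t](x,y) on I = [0,1] ∪ {∞} ⊆ ℝ≥0∞: min x y if min x y > t, else ∞. -/
noncomputable def gammaMap (t : ℝ) (x y : ℝ≥0∞) : ℝ≥0∞ :=
  if ENNReal.ofReal t < min x y then min x y else ⊤

lemma gammaMap_measurable :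
    Measurable (fun p : ℝ × ℝ≥0∞ × ℝ≥0∞ => gammaMap p.1 p.2.1 p.2.2) := by
  unfold gammaMap
  apply Measurable.ite
  · exact measurableSet_lt (by fun_prop) (by fun_prop)
  · fun_prop
  · fun_prop

/-- Every solution μ (a probability measure on I = [0,1] ∪ {∞}) of the RDE
X ≐ γ[τ](X₁,X₂), with τ uniform on [0,1] and X₁, X₂ i.i.d. ~ μ independent of τ,
is concentrated on [1/2,1] ∪ {∞}; in particular μ([0,1/2)) = 0. -/
theorem stmt8 (μ : Measure ℝ≥0∞) [IsProbabilityMeasure μ]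
    (hconc : μ {x : ℝ≥0∞ | 1 < x ∧ x ≠ ⊤} = 0)
    (hRDE : Measure.map (fun p : ℝ × ℝ≥0∞ × ℝ≥0∞ => gammaMap p.1 p.2.1 p.2.2)
      ((volume.restrict (Set.Icc (0:ℝ) 1)).prod (μ.prod μ)) = μ) :
    μ (Set.Ico 0 (ENNReal.ofReal (1/2))) = 0 := by
  have key : ∀ s : ℝ, 0 < s → s < 1/2 → μ (Set.Iic (ENNReal.ofReal s)) = 0 := by
    intro s hs0 hs
    set c := ENNReal.ofReal s with hc
    have hc_lt_top : c < ⊤ := ENNReal.ofReal_lt_top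
    set g := μ (Set.Iic c) with hg
    -- compute g via the RDE
    have hmap : μ (Set.Iic c)
        = ((volume.restrict (Set.Icc (0:ℝ) 1)).prod (μ.prod μ))
          ((fun p : ℝ × ℝ≥0∞ × ℝ≥0∞ => gammaMap p.1 p.2.1 p.2.2) ⁻¹' Set.Iic c) := by
      conv_lhs => rw [← hRDE]
      exact Measure.map_apply gammaMap_measurable measurableSet_Iic
    -- the preimage is contained in a nice product set
    have hsub : (fun p : ℝ × ℝ≥0∞ × ℝ≥0∞ => gammaMap p.1 p.2.1 p.2.2) ⁻¹' Set.Iic c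
        ⊆ Set.Iio s ×ˢ ((Set.Iic c ×ˢ (Set.univ : Set ℝ≥0∞))
            ∪ ((Set.univ : Set ℝ≥0∞) ×ˢ Set.Iic c)) := by
      rintro ⟨t, x, y⟩ hp
      simp only [Set.mem_preimage, Set.mem_Iic, gammaMap] at hp
      by_cases h : ENNReal.ofReal t < min x y
      · rw [if_pos h] at hp
        have ht : ENNReal.ofReal t < c := lt_of_lt_of_le h hp
        have ht' : t < s := by
          by_contra hts
          push_neg at hts
          exact absurd (ENNReal.ofReal_le_ofReal hts) (not_le.mpr ht)
        have hxy : x ≤ c ∨ y ≤ c := min_le_iff.mp hp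
        constructor
        · exact ht'
        · rcases hxy with h1 | h1
          · exact Or.inl ⟨h1, trivial⟩
          · exact Or.inr ⟨trivial, h1⟩
      · rw [if_neg h] at hp
        exact absurd hp (not_le.mpr hc_lt_top)
    have hbound : g ≤ ENNReal.ofReal s * (2 * g) := by
      calc g = ((volume.restrict (Set.Icc (0:ℝ) 1)).prod (μ.prod μ))
            ((fun p : ℝ × ℝ≥0∞ × ℝ≥0∞ => gammaMap p.1 p.2.1 p.2.2) ⁻¹' Set.Iic c) := hmap
        _ ≤ ((volume.restrict (Set.Icc (0:ℝ) 1)).prod (μ.prod μ))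
            (Set.Iio s ×ˢ ((Set.Iic c ×ˢ Set.univ) ∪ (Set.univ ×ˢ Set.Iic c))) :=
            measure_mono hsub
        _ = (volume.restrict (Set.Icc (0:ℝ) 1)) (Set.Iio s)
            * (μ.prod μ) ((Set.Iic c ×ˢ Set.univ) ∪ (Set.univ ×ˢ Set.Iic c)) :=
            Measure.prod_prod _ _
        _ ≤ ENNReal.ofReal s * (2 * g) := by
            apply mul_le_mul'
            · rw [Measure.restrict_apply measurableSet_Iio]
              have : Set.Iio s ∩ Set.Icc (0:ℝ) 1 ⊆ Set.Ico 0 s := by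
                rintro t ⟨h1, h2, _⟩; exact ⟨h2, h1⟩
              calc volume (Set.Iio s ∩ Set.Icc (0:ℝ) 1) ≤ volume (Set.Ico 0 s) :=
                    measure_mono this
                _ = ENNReal.ofReal s := by rw [Real.volume_Ico]; simp
            · calc (μ.prod μ) ((Set.Iic c ×ˢ Set.univ) ∪ (Set.univ ×ˢ Set.Iic c))
                  ≤ (μ.prod μ) (Set.Iic c ×ˢ Set.univ) + (μ.prod μ) (Set.univ ×ˢ Set.Iic c) :=
                    measure_union_le _ _
                _ = g * 1 + 1 * g := by
                    rw [Measure.prod_prod, Measure.prod_prod, measure_univ]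
                _ = 2 * g := by ring
    -- conclude g = 0
    by_contra hgne
    have hg1 : g ≤ 1 := prob_le_one
    have hlt : ENNReal.ofReal s * 2 < 1 := by
      rw [show (2:ℝ≥0∞) = ENNReal.ofReal 2 by simp, ← ENNReal.ofReal_mul hs0.le]
      rw [show (1:ℝ≥0∞) = ENNReal.ofReal 1 by simp]
      exact ENNReal.ofReal_lt_ofReal_iff_of_nonneg (by positivity) |>.mpr (by linarith)
    have : ENNReal.ofReal s * (2 * g) < 1 * g := by
      rw [← mul_assoc]
      exact ENNReal.mul_lt_mul_iff_left hgne (lt_of_le_of_lt hg1 ENNReal.one_lt_top).ne |>.mpr hlt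
    rw [one_mul] at this
    exact absurd (lt_of_le_of_lt hbound this) (lt_irrefl g)
  -- exhaust Ico 0 (1/2)
  have hcover : Set.Ico (0:ℝ≥0∞) (ENNReal.ofReal (1/2))
      ⊆ ⋃ n : ℕ, Set.Iic (ENNReal.ofReal (1/2 - 1/(n+3))) := by
    rintro x ⟨-, hx⟩
    have hxt : x ≠ ⊤ := ne_top_of_lt hx
    have hxr : x.toReal < 1/2 := by
      rw [← ENNReal.ofReal_toReal hxt] at hx
      exact (ENNReal.ofReal_lt_ofReal_iff (by norm_num)).mp hx
    obtain ⟨n, hn⟩ := exists_nat_gt (1 / (1/2 - x.toReal))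
    refine Set.mem_iUnion.mpr ⟨n, ?_⟩
    have hpos : 0 < 1/2 - x.toReal := by linarith
    have hn2 : (1:ℝ)/(n+3) < 1/2 - x.toReal := by
      rw [div_lt_iff₀ (by positivity)]
      rw [div_lt_iff₀ hpos] at hn
      nlinarith
    have : x.toReal ≤ 1/2 - 1/(n+3) := by linarith
    rw [← ENNReal.ofReal_toReal hxt]
    exact Set.mem_Iic.mpr (ENNReal.ofReal_le_ofReal this)
  refine le_antisymm ?_ zero_le
  calc μ (Set.Ico 0 (ENNReal.ofReal (1/2)))
      ≤ μ (⋃ n : ℕ, Set.Iic (ENNReal.ofReal (1/2 - 1/(n+3)))) := measure_mono hcover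
    _ ≤ ∑' n : ℕ, μ (Set.Iic (ENNReal.ofReal (1/2 - 1/(n+3)))) := measure_iUnion_le _
    _ = 0 := by
        have h0 : ∀ n : ℕ, μ (Set.Iic (ENNReal.ofReal (1/2 - 1/(n+3)))) = 0 := by
          intro n
          apply key
          · have h1 : (1:ℝ)/(n+3) ≤ 1/3 := by
              apply div_le_div_of_nonneg_left (by norm_num) (by norm_num)
              push_cast; linarith [Nat.cast_nonneg (α := ℝ) n]
            linarith
          · have : (0:ℝ) < 1/(n+3) := by positivity
            linarith
        simpa using h0
end
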